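/- For a cartesian closed category C and object γ, the functor from the subobject category Sub(C, γ) to Chu(C, γ), sending a monomorphism i : a ↪ γ to (a, i ∘ pr_a, 1) where pr_a : a × 1 → a is the projection and 1 is terminal, and a morphism f : i → j to (f, 1_1), is a full embedding. -/

import Mathlib

open CategoryTheory CategoryTheory.Limits MonoidalCategory

universe v u

variable (C : Type u) [Category.{v} C] [CartesianMonoidalCategory C] [MonoidalClosed C]

/-- A Chu space over the ccc `C` and the object `γ`. -/
structure ChuObj (γ : C) : Type (max u v) where
  a : C
  x : C
  f : a ⊗ x ⟶ γ

variable {C}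

/-- A Chu transform. -/
@[ext]
structure ChuHom {γ : C} (A B : ChuObj C γ) : Type v where
  plus : A.a ⟶ B.a
  minus : B.x ⟶ A.x
  comm : (𝟙 A.a ⊗ₘ minus) ≫ A.f = (plus ⊗ₘ 𝟙 B.x) ≫ B.f

/-- The Chu category `Chu(C, γ)`. -/
instance chuCategory {γ : C} : Category (ChuObj C γ) where
  Hom := ChuHom
  id A := ⟨𝟙 A.a, 𝟙 A.x, rfl⟩
  comp φ θ := ⟨φ.plus ≫ θ.plus, θ.minus ≫ φ.minus, by
    calc (𝟙 _ ⊗ₘ θ.minus ≫ φ.minus) ≫ _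
        = (𝟙 _ ⊗ₘ θ.minus) ≫ (𝟙 _ ⊗ₘ φ.minus) ≫ _ := by
          rw [← Category.assoc, MonoidalCategory.tensorHom_comp_tensorHom, Category.comp_id]
      _ = (𝟙 _ ⊗ₘ θ.minus) ≫ (φ.plus ⊗ₘ 𝟙 _) ≫ _ := by rw [φ.comm]
      _ = (φ.plus ⊗ₘ 𝟙 _) ≫ (𝟙 _ ⊗ₘ θ.minus) ≫ _ := by
          rw [← Category.assoc, ← Category.assoc, MonoidalCategory.tensorHom_comp_tensorHom,
            MonoidalCategory.tensorHom_comp_tensorHom, Category.id_comp, Category.comp_id,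
            Category.id_comp, Category.comp_id]
      _ = (φ.plus ⊗ₘ 𝟙 _) ≫ (θ.plus ⊗ₘ 𝟙 _) ≫ _ := by rw [θ.comm]
      _ = ((φ.plus ≫ θ.plus) ⊗ₘ 𝟙 _) ≫ _ := by
          rw [← Category.assoc, MonoidalCategory.tensorHom_comp_tensorHom, Category.comp_id]⟩
  id_comp φ := ChuHom.ext (Category.id_comp _) (Category.comp_id _)
  comp_id φ := ChuHom.ext (Category.comp_id _) (Category.id_comp _)
  assoc φ θ ρ := ChuHom.ext (Category.assoc _ _ _) (Category.assoc _ _ _).symm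

open MonoidalCategory CartesianMonoidalCategory

/-- A subobject of `γ`: an object `a` together with a monomorphism `i : a ↪ γ`. -/
structure SubObj (γ : C) : Type (max u v) where
  a : C
  i : a ⟶ γ
  mono : Mono i

/-- The (thin) category `Sub(C, γ)` of subobjects of `γ`: a morphism `i → j` is a
morphism `f : a → b` with `j ∘ f = i`. -/
instance subObjCategory {γ : C} : Category (SubObj γ) where
  Hom A B := {f : A.a ⟶ B.a // f ≫ B.i = A.i}
  id A := ⟨𝟙 A.a, Category.id_comp _⟩
  comp f g := ⟨f.1 ≫ g.1, by rw [Category.assoc, g.2, f.2]⟩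
  id_comp f := Subtype.ext (Category.id_comp _)
  comp_id f := Subtype.ext (Category.comp_id _)
  assoc f g h := Subtype.ext (Category.assoc _ _ _)

/-- The functor `Sub(C, γ) → Chu(C, γ)` sending `i : a ↪ γ` to `(a, i ∘ pr_a, 1)`
(with `1` the terminal object, i.e. the monoidal unit, and `pr_a : a × 1 → a` the
projection), and `f : i → j` to `(f, 1_1)`. -/
def ESubObj (γ : C) : SubObj γ ⥤ ChuObj C γ where
  obj A := ⟨A.a, 𝟙_ C, fst A.a (𝟙_ C) ≫ A.i⟩
  map {A B} f := ⟨f.1, 𝟙 (𝟙_ C), by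
    show (𝟙 A.a ⊗ₘ 𝟙 (𝟙_ C)) ≫ (fst A.a (𝟙_ C) ≫ A.i) = (f.1 ⊗ₘ 𝟙 (𝟙_ C)) ≫ (fst B.a (𝟙_ C) ≫ B.i)
    rw [id_tensorHom_id, Category.id_comp, ← Category.assoc, tensorHom_fst, Category.assoc, f.2]⟩
  map_id A := ChuHom.ext rfl rfl
  map_comp f g := ChuHom.ext rfl (Category.id_comp (𝟙 (𝟙_ C))).symm

/-- for a ccc `C` and an object `γ`, the functor
`Sub(C, γ) → Chu(C, γ)`, `i ↦ (a, i ∘ pr_a, 1)`, `f ↦ (f, 1_1)`, is a full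
embedding: full, faithful and injective on objects. -/
theorem ESubObj_full_embedding (γ : C) :
    (ESubObj (C := C) γ).Full ∧ (ESubObj (C := C) γ).Faithful ∧
      Function.Injective (ESubObj (C := C) γ).obj := by
  refine ⟨⟨?_⟩, ⟨?_⟩, ?_⟩
  · intro A B φ
    refine ⟨⟨φ.plus, ?_⟩, ?_⟩
    · have h := φ.comm
      have hm : φ.minus = 𝟙 (𝟙_ C) := toUnit_unique _ _
      rw [hm] at h
      have h2 := congrArg (fun g => lift (𝟙 A.a) (toUnit A.a) ≫ g) h
      simp only [ESubObj, id_tensorHom_id, Category.id_comp, ← Category.assoc, tensorHom_fst,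
        lift_fst, lift_map] at h2
      simpa using h2.symm
    · refine ChuHom.ext rfl ?_
      exact toUnit_unique _ _
  · intro A B f g h
    exact Subtype.ext (congrArg ChuHom.plus h)
  · intro A B h
    obtain ⟨a, i, hi⟩ := A
    obtain ⟨b, j, hj⟩ := B
    simp only [ESubObj, ChuObj.mk.injEq] at h
    obtain ⟨h1, -, h3⟩ := h
    subst h1
    have h3' : fst a (𝟙_ C) ≫ i = fst a (𝟙_ C) ≫ j := eq_of_heq h3
    have : i = j := by
      have := congrArg (lift (𝟙 a) (toUnit a) ≫ ·) h3'
      simpa [← Category.assoc] using this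
    subst this
    rfl
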